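/- For every natural number L, the product (-q;q²)_L = ∏_{k=1}^{L} (1+q^(2k-1)) equals the alternating sum over all integers j of (-1)^j q^(2j²) times the Gaussian binomial coefficient (2L choose L-2j) in base q, and this also equals the alternating sum over all integers j of (-1)^j q^(2j²) times the Gaussian binomial coefficient (2L+1 choose L-2j) in base q. -/

import Mathlib

open LaurentPolynomial Finset

noncomputable section

/-- Gaussian binomial coefficient with natural indices, in base `x`, defined by the
`q`-Pascal recurrence `[n+1, k+1] = [n, k] + x^(k+1) * [n, k+1]`.  It vanishes for `k > n`. -/
def gaussAux (x : LaurentPolynomial ℤ) : ℕ → ℕ → LaurentPolynomial ℤ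
  | _, 0 => 1
  | 0, _ + 1 => 0
  | n + 1, k + 1 => gaussAux x n k + x ^ (k + 1) * gaussAux x n (k + 1)

variable {x : LaurentPolynomial ℤ}

lemma gaussAux_zero_right (n : ℕ) : gaussAux x n 0 = 1 := by cases n <;> rfl

lemma gaussAux_eq_zero {n k : ℕ} (h : n < k) : gaussAux x n k = 0 := by
  induction n generalizing k with
  | zero => cases k with
    | zero => omega
    | succ m => rfl
  | succ n ih =>
    cases k with
    | zero => omega
    | succ m =>
      show gaussAux x n m + x ^ (m+1) * gaussAux x n (m+1) = 0
      rw [ih (by omega), ih (by omega)]; ring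

lemma gaussAux_diag (n : ℕ) : gaussAux x n n = 1 := by
  induction n with
  | zero => rfl
  | succ n ih =>
    show gaussAux x n n + x ^ (n+1) * gaussAux x n (n+1) = 1
    rw [ih, gaussAux_eq_zero (by omega)]; ring

lemma gaussAux_pascal1 (n k : ℕ) :
    gaussAux x (n+1) (k+1) = gaussAux x n k + x ^ (k + 1) * gaussAux x n (k+1) := rfl

lemma gaussAux_one (n : ℕ) : gaussAux x (n+1) 1 = gaussAux x n 1 + x ^ n := by
  induction n with
  | zero =>
    rw [gaussAux_pascal1, gaussAux_zero_right, gaussAux_eq_zero (by omega)]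
    simp
  | succ n ih =>
    calc gaussAux x (n+1+1) 1 = 1 + x^(0+1) * gaussAux x (n+1) 1 := by
          rw [gaussAux_pascal1, gaussAux_zero_right]
      _ = 1 + x^(0+1) * (gaussAux x n 1 + x^n) := by rw [ih]
      _ = (1 + x^(0+1) * gaussAux x n 1) + x^(n+1) := by ring
      _ = gaussAux x (n+1) 1 + x^(n+1) := by rw [gaussAux_pascal1, gaussAux_zero_right]

lemma gaussAux_pascal2 (n k : ℕ) :
    gaussAux x (n+1) (k+1) = x ^ (n - k) * gaussAux x n k + gaussAux x n (k+1) := by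
  induction n generalizing k with
  | zero =>
    cases k with
    | zero =>
      rw [gaussAux_pascal1, gaussAux_zero_right, gaussAux_eq_zero (by omega)]
      simp
    | succ m =>
      rw [gaussAux_eq_zero (show 1 < m+2 by omega), gaussAux_eq_zero (show 0 < m+1 by omega),
        gaussAux_eq_zero (show 0 < m+2 by omega)]
      ring
  | succ n ih =>
    cases k with
    | zero =>
      rw [gaussAux_one, Nat.sub_zero, gaussAux_zero_right]; ring
    | succ m =>
      conv_lhs => rw [gaussAux_pascal1, ih m, ih (m+1)]
      conv_rhs => rw [gaussAux_pascal1 n m, gaussAux_pascal1 n (m+1)]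
      rw [show n+1-(m+1) = n-m by omega, show n-(m+1) = n-m-1 by omega]
      rcases le_or_gt (m+1) n with h | h
      · have hx : x^(m+1+1) * x^(n-m-1) = x^(n-m) * x^(m+1) := by
          rw [← pow_add, ← pow_add]; congr 1; omega
        linear_combination (gaussAux x n (m+1)) * hx
      · have h1 : gaussAux x n (m+1) = 0 := gaussAux_eq_zero (by omega)
        have h2 : gaussAux x n (m+1+1) = 0 := gaussAux_eq_zero (by omega)
        rw [h1, h2]
        ring

lemma gaussAux_symm {n k : ℕ} (h : k ≤ n) : gaussAux x n k = gaussAux x n (n - k) := by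
  induction n generalizing k with
  | zero => interval_cases k; rfl
  | succ n ih =>
    cases k with
    | zero => rw [gaussAux_zero_right, Nat.sub_zero, gaussAux_diag]
    | succ m =>
      rw [gaussAux_pascal2]
      rcases Nat.lt_or_ge m n with hm | hm
      · rw [show n + 1 - (m+1) = (n - m - 1) + 1 by omega, gaussAux_pascal1]
        rw [ih (show m ≤ n by omega), ih (show m + 1 ≤ n by omega)]
        rw [show n - (m+1) = n - m - 1 by omega, show n - m - 1 + 1 = n - m by omega]
        ring
      · have hmn : m = n := by omega
        subst hmn
        rw [show m + 1 - (m+1) = 0 by omega, gaussAux_zero_right, gaussAux_diag,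
          gaussAux_eq_zero (show m < m+1 by omega)]
        simp


/-- The Gaussian binomial coefficient `[n choose k]` in base `x`, for integer indices:
it is zero when `n < 0` or `k < 0` (and, by `gaussAux`, also when `k > n`). -/
def qbin (x : LaurentPolynomial ℤ) (n k : ℤ) : LaurentPolynomial ℤ :=
  if 0 ≤ n ∧ 0 ≤ k then gaussAux x n.toNat k.toNat else 0

/-- `(-1)^j` for an integer `j`, as a Laurent polynomial. -/
def m1 (j : ℤ) : LaurentPolynomial ℤ := ((((-1 : ℤˣ) ^ j : ℤˣ) : ℤ) : LaurentPolynomial ℤ)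


lemma qbin_natCast (n k : ℕ) : qbin x n k = gaussAux x n k := by
  simp [qbin]

lemma qbin_neg {n k : ℤ} (h : k < 0) : qbin x n k = 0 := by
  simp only [qbin, ite_eq_right_iff]
  intro hc; omega

lemma qbin_gt {n k : ℤ} (h : n < k) : qbin x n k = 0 := by
  unfold qbin
  split_ifs with h'
  · exact gaussAux_eq_zero (by omega)
  · rfl

lemma qbin_pascal1 (n : ℕ) (k : ℤ) :
    qbin (T 1) (n + 1) k = qbin (T 1) n (k - 1) + T k * qbin (T 1) n k := by
  rcases lt_trichotomy k 0 with h | h | h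
  · rw [qbin_neg h, qbin_neg (by omega : k - 1 < 0), qbin_neg h]
    ring
  · subst h
    rw [qbin_neg (by omega : (0:ℤ) - 1 < 0), T_zero]
    rw [show ((n:ℤ) + 1) = ((n+1 : ℕ) : ℤ) by omega]
    rw [show (0:ℤ) = ((0:ℕ):ℤ) by norm_num, qbin_natCast, qbin_natCast,
      gaussAux_zero_right, gaussAux_zero_right]
    ring
  · obtain ⟨m, rfl⟩ : ∃ m : ℕ, k = (m : ℤ) + 1 := ⟨(k-1).toNat, by omega⟩
    rw [show ((n:ℤ) + 1) = ((n+1 : ℕ) : ℤ) by omega,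
      show ((m:ℤ) + 1) = ((m+1 : ℕ) : ℤ) by omega,
      show ((m+1:ℕ):ℤ) - 1 = ((m : ℕ) : ℤ) by omega,
      qbin_natCast, qbin_natCast, qbin_natCast, gaussAux_pascal1,
      show (T (((m+1:ℕ):ℤ)) : LaurentPolynomial ℤ) = (T 1)^(m+1) by rw [T_pow]; norm_num]

lemma qbin_pascal2 (n : ℕ) (k : ℤ) :
    qbin (T 1) (n + 1) k = T ((n:ℤ) + 1 - k) * qbin (T 1) n (k - 1) + qbin (T 1) n k := by
  rcases lt_trichotomy k 0 with h | h | h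
  · rw [qbin_neg h, qbin_neg (by omega : k - 1 < 0), qbin_neg h]
    ring
  · subst h
    rw [qbin_neg (by omega : (0:ℤ) - 1 < 0), mul_zero, zero_add]
    rw [show ((n:ℤ) + 1) = ((n+1 : ℕ) : ℤ) by omega]
    rw [show (0:ℤ) = ((0:ℕ):ℤ) by norm_num, qbin_natCast, qbin_natCast,
      gaussAux_zero_right, gaussAux_zero_right]
  · obtain ⟨m, rfl⟩ : ∃ m : ℕ, k = (m : ℤ) + 1 := ⟨(k-1).toNat, by omega⟩
    rcases le_or_gt (m : ℤ) (n : ℤ) with hm | hm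
    · rw [show ((n:ℤ) + 1) = ((n+1 : ℕ) : ℤ) by omega,
        show ((m:ℤ) + 1) = ((m+1 : ℕ) : ℤ) by omega,
        show ((m+1:ℕ):ℤ) - 1 = ((m : ℕ) : ℤ) by omega,
        qbin_natCast, qbin_natCast, qbin_natCast, gaussAux_pascal2,
        show ((n+1:ℕ):ℤ) - ((m+1:ℕ):ℤ) = ((n - m : ℕ) : ℤ) by omega,
        show (T (((n - m:ℕ):ℤ)) : LaurentPolynomial ℤ) = (T 1)^(n-m) by rw [T_pow]; norm_num]
    · rw [qbin_gt (by omega : (n:ℤ) + 1 < (m:ℤ) + 1), qbin_gt (by omega : (n:ℤ) < (m:ℤ) + 1 - 1),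
        qbin_gt (by omega : (n:ℤ) < (m:ℤ) + 1)]
      ring

lemma qbin_symm (n : ℕ) (k : ℤ) : qbin x n k = qbin x n ((n : ℤ) - k) := by
  rcases lt_or_ge k 0 with h | h
  · rw [qbin_neg h, qbin_gt (show (n:ℤ) < (n:ℤ) - k by omega)]
  · rcases le_or_gt k (n:ℤ) with h2 | h2
    · obtain ⟨m, rfl⟩ : ∃ m : ℕ, k = (m:ℤ) := ⟨k.toNat, by omega⟩
      have hm : m ≤ n := by exact_mod_cast h2
      rw [show ((n:ℤ) - (m:ℤ)) = ((n - m : ℕ) : ℤ) by omega,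
        qbin_natCast, qbin_natCast, gaussAux_symm hm]
    · rw [qbin_gt h2, qbin_neg (by omega)]

lemma m1_add (a b : ℤ) : m1 (a + b) = m1 a * m1 b := by
  unfold m1
  rw [zpow_add]
  push_cast
  ring

lemma m1_zero : m1 0 = 1 := by simp [m1]

lemma m1_neg (j : ℤ) : m1 (-j) = m1 j := by
  unfold m1
  rw [zpow_neg, inv_eq_of_mul_eq_one_right (Int.units_mul_self _)]

lemma m1_one : m1 1 = -1 := by simp [m1]

lemma m1_negsub (j : ℤ) : m1 (-j - 1) = - m1 j := by
  rw [show -j - 1 = -j + -1 by ring, m1_add, m1_neg,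
    show (-1 : ℤ) = -(1:ℤ) by ring, m1_neg, m1_one]
  ring

lemma supp_fin (x : LaurentPolynomial ℤ) (n m : ℤ) (g : ℤ → LaurentPolynomial ℤ) :
    (Function.support fun j : ℤ => g j * qbin x n (m - 2*j)).Finite := by
  apply Set.Finite.subset ((Set.finite_Icc (m - n) m).preimage
    (f := fun j : ℤ => 2*j) (Set.injOn_of_injective (fun a b hab => by omega)))
  intro j hj
  simp only [Function.mem_support] at hj
  simp only [Set.mem_preimage, Set.mem_Icc]
  by_contra hc
  apply hj
  have hz : qbin x n (m - 2*j) = 0 := by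
    rcases lt_or_ge (m - 2*j) 0 with h | h
    · exact qbin_neg h
    · exact qbin_gt (by omega)
  rw [hz, mul_zero]

lemma lp_two_ne_zero : (2 : LaurentPolynomial ℤ) ≠ 0 := by
  have h : Polynomial.toLaurent (2 : Polynomial ℤ) = (2 : LaurentPolynomial ℤ) := map_ofNat _ 2
  rw [← h]
  rw [Polynomial.toLaurent_ne_zero]
  norm_num

lemma Tmul (a b c : ℤ) (h : a + b = c) : (T a : LaurentPolynomial ℤ) * T b = T c := by
  rw [← h, ← T_add]

def negsubE : ℤ ≃ ℤ :=
  ⟨fun j => -j - 1, fun j => -j - 1, fun j => by ring, fun j => by ring⟩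

lemma Dzero (L : ℕ) (b : ℤ) :
    (∑ᶠ j : ℤ, m1 j * T (2*j^2 + 2*j + b) * qbin (T 1) (2*(L:ℤ)) ((L:ℤ) - 1 - 2*j)) = 0 := by
  set f : ℤ → LaurentPolynomial ℤ :=
    fun j => m1 j * T (2*j^2 + 2*j + b) * qbin (T 1) (2*(L:ℤ)) ((L:ℤ) - 1 - 2*j) with hf
  have key : ∀ j : ℤ, f (negsubE j) = - f j := by
    intro j
    show f (-j - 1) = - f j
    simp only [hf]
    rw [m1_negsub]
    rw [show 2*(-j-1)^2 + 2*(-j-1) + b = 2*j^2+2*j+b by ring]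
    rw [show (L:ℤ) - 1 - 2*(-j-1) = (L:ℤ) + 1 + 2*j by ring]
    rw [show (2*(L:ℤ)) = ((2*L : ℕ) : ℤ) by omega]
    rw [qbin_symm (2*L) ((L:ℤ)+1+2*j)]
    rw [show ((2*L:ℕ):ℤ) - ((L:ℤ)+1+2*j) = (L:ℤ) - 1 - 2*j by omega]
    ring
  have h2 : ∑ᶠ j, f j = - ∑ᶠ j, f j := by
    calc ∑ᶠ j, f j = ∑ᶠ j, f (negsubE j) := (finsum_comp_equiv negsubE).symm
    _ = ∑ᶠ j, - f j := finsum_congr key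
    _ = - ∑ᶠ j, f j := finsum_neg_distrib f
  have h3 : (2 : LaurentPolynomial ℤ) * ∑ᶠ j, f j = 0 := by linear_combination h2
  rcases mul_eq_zero.mp h3 with h | h
  · exact absurd h lp_two_ne_zero
  · exact h

lemma B_eq_A (L : ℕ) :
    (∑ᶠ j : ℤ, m1 j * T (2*j^2) * qbin (T 1) (2*(L:ℤ)+1) ((L:ℤ) - 2*j))
      = ∑ᶠ j : ℤ, m1 j * T (2*j^2) * qbin (T 1) (2*(L:ℤ)) ((L:ℤ) - 2*j) := by
  have step : ∀ j : ℤ, m1 j * T (2*j^2) * qbin (T 1) (2*(L:ℤ)+1) ((L:ℤ) - 2*j)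
      = m1 j * T (2*j^2+2*j+((L:ℤ)+1)) * qbin (T 1) (2*(L:ℤ)) ((L:ℤ) - 1 - 2*j)
        + m1 j * T (2*j^2) * qbin (T 1) (2*(L:ℤ)) ((L:ℤ) - 2*j) := by
    intro j
    rw [show (2*(L:ℤ)+1) = ((2*L:ℕ):ℤ) + 1 by omega, qbin_pascal2 (2*L) ((L:ℤ)-2*j)]
    rw [show ((2*L:ℕ):ℤ) + 1 - ((L:ℤ)-2*j) = (L:ℤ)+1+2*j by omega]
    rw [show (L:ℤ)-2*j - 1 = (L:ℤ)-1-2*j by ring]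
    rw [show ((2*L:ℕ):ℤ) = 2*(L:ℤ) by omega]
    linear_combination (m1 j * qbin (T 1) (2*(L:ℤ)) ((L:ℤ)-1-2*j)) *
      Tmul (2*j^2) ((L:ℤ)+1+2*j) (2*j^2+2*j+((L:ℤ)+1)) (by ring)
  rw [finsum_congr step,
    finsum_add_distrib
      (supp_fin (T 1) (2*(L:ℤ)) ((L:ℤ)-1) (fun j => m1 j * T (2*j^2+2*j+((L:ℤ)+1))))
      (supp_fin (T 1) (2*(L:ℤ)) (L:ℤ) (fun j => m1 j * T (2*j^2))),
    Dzero L ((L:ℤ)+1), zero_add]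

lemma A_succ (L : ℕ) :
    (∑ᶠ j : ℤ, m1 j * T (2*j^2) * qbin (T 1) (2*(L:ℤ)+2) ((L:ℤ) + 1 - 2*j))
      = (1 + T (2*(L:ℤ)+1)) * ∑ᶠ j : ℤ, m1 j * T (2*j^2) * qbin (T 1) (2*(L:ℤ)) ((L:ℤ) - 2*j) := by
  have step1 : ∀ j : ℤ, m1 j * T (2*j^2) * qbin (T 1) (2*(L:ℤ)+2) ((L:ℤ) + 1 - 2*j)
      = m1 j * T (2*j^2+2*j+((L:ℤ)+1)) * qbin (T 1) (2*(L:ℤ)+1) ((L:ℤ) - 2*j)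
        + m1 j * T (2*j^2) * qbin (T 1) (2*(L:ℤ)+1) ((L:ℤ) + 1 - 2*j) := by
    intro j
    rw [show (2*(L:ℤ)+2) = ((2*L+1:ℕ):ℤ) + 1 by omega, qbin_pascal2 (2*L+1) ((L:ℤ)+1-2*j)]
    rw [show ((2*L+1:ℕ):ℤ) + 1 - ((L:ℤ)+1-2*j) = (L:ℤ)+1+2*j by omega]
    rw [show (L:ℤ)+1-2*j - 1 = (L:ℤ)-2*j by ring]
    rw [show ((2*L+1:ℕ):ℤ) = 2*(L:ℤ)+1 by omega]
    linear_combination (m1 j * qbin (T 1) (2*(L:ℤ)+1) ((L:ℤ)-2*j)) *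
      Tmul (2*j^2) ((L:ℤ)+1+2*j) (2*j^2+2*j+((L:ℤ)+1)) (by ring)
  rw [finsum_congr step1,
    finsum_add_distrib
      (supp_fin (T 1) (2*(L:ℤ)+1) (L:ℤ) (fun j => m1 j * T (2*j^2+2*j+((L:ℤ)+1))))
      (supp_fin (T 1) (2*(L:ℤ)+1) ((L:ℤ)+1) (fun j => m1 j * T (2*j^2)))]
  have S2 : (∑ᶠ j : ℤ, m1 j * T (2*j^2) * qbin (T 1) (2*(L:ℤ)+1) ((L:ℤ) + 1 - 2*j))
      = ∑ᶠ j : ℤ, m1 j * T (2*j^2) * qbin (T 1) (2*(L:ℤ)+1) ((L:ℤ) - 2*j) := by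
    have sym : ∀ j : ℤ, m1 j * T (2*j^2) * qbin (T 1) (2*(L:ℤ)+1) ((L:ℤ) + 1 - 2*j)
        = (fun i : ℤ => m1 i * T (2*i^2) * qbin (T 1) (2*(L:ℤ)+1) ((L:ℤ) - 2*i))
            ((Equiv.neg ℤ) j) := by
      intro j
      simp only [Equiv.neg_apply]
      rw [m1_neg, show 2*(-j)^2 = 2*j^2 by ring,
        show (L:ℤ) - 2*(-j) = (L:ℤ) + 2*j by ring,
        show (2*(L:ℤ)+1) = ((2*L+1:ℕ):ℤ) by omega,
        qbin_symm (2*L+1) ((L:ℤ)+1-2*j),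
        show ((2*L+1:ℕ):ℤ) - ((L:ℤ)+1-2*j) = (L:ℤ)+2*j by omega]
    exact (finsum_congr sym).trans (finsum_comp_equiv (Equiv.neg ℤ)
      (f := fun i : ℤ => m1 i * T (2*i^2) * qbin (T 1) (2*(L:ℤ)+1) ((L:ℤ) - 2*i)))
  have S1 : (∑ᶠ j : ℤ, m1 j * T (2*j^2+2*j+((L:ℤ)+1)) * qbin (T 1) (2*(L:ℤ)+1) ((L:ℤ) - 2*j))
      = T (2*(L:ℤ)+1) * ∑ᶠ j : ℤ, m1 j * T (2*j^2) * qbin (T 1) (2*(L:ℤ)) ((L:ℤ) - 2*j) := by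
    have step3 : ∀ j : ℤ, m1 j * T (2*j^2+2*j+((L:ℤ)+1)) * qbin (T 1) (2*(L:ℤ)+1) ((L:ℤ) - 2*j)
        = m1 j * T (2*j^2+2*j+((L:ℤ)+1)) * qbin (T 1) (2*(L:ℤ)) ((L:ℤ) - 1 - 2*j)
          + T (2*(L:ℤ)+1) * (m1 j * T (2*j^2) * qbin (T 1) (2*(L:ℤ)) ((L:ℤ) - 2*j)) := by
      intro j
      rw [show (2*(L:ℤ)+1) = ((2*L:ℕ):ℤ) + 1 by omega, qbin_pascal1 (2*L) ((L:ℤ)-2*j)]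
      rw [show (L:ℤ)-2*j - 1 = (L:ℤ)-1-2*j by ring]
      rw [show ((2*L:ℕ):ℤ) = 2*(L:ℤ) by omega]
      have e1 := Tmul (2*j^2+2*j+((L:ℤ)+1)) ((L:ℤ)-2*j) (2*(L:ℤ)+1+2*j^2) (by ring)
      have e2 := Tmul (2*(L:ℤ)+1) (2*j^2) (2*(L:ℤ)+1+2*j^2) (by ring)
      linear_combination (m1 j * qbin (T 1) (2*(L:ℤ)) ((L:ℤ)-2*j)) * e1
        - (m1 j * qbin (T 1) (2*(L:ℤ)) ((L:ℤ)-2*j)) * e2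
    rw [finsum_congr step3,
      finsum_add_distrib
        (supp_fin (T 1) (2*(L:ℤ)) ((L:ℤ)-1) (fun j => m1 j * T (2*j^2+2*j+((L:ℤ)+1))))
        ((supp_fin (T 1) (2*(L:ℤ)) (L:ℤ) (fun j => m1 j * T (2*j^2))).subset (by
          intro j hj
          simp only [Function.mem_support] at hj ⊢
          intro hc
          apply hj
          rw [hc, mul_zero])),
      Dzero L ((L:ℤ)+1), zero_add,
      mul_finsum _ _]
  rw [S1, S2, B_eq_A]
  ring


theorem stmt1 (L : ℕ) :
    (∏ k ∈ Finset.Icc 1 L, (1 + T (2 * (k : ℤ) - 1))) =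
      (∑ᶠ j : ℤ, m1 j * T (2 * j ^ 2) * qbin (T 1) (2 * L) (L - 2 * j)) ∧
    (∏ k ∈ Finset.Icc 1 L, (1 + T (2 * (k : ℤ) - 1))) =
      ∑ᶠ j : ℤ, m1 j * T (2 * j ^ 2) * qbin (T 1) (2 * L + 1) (L - 2 * j) := by
  have main : ∀ M : ℕ, (∏ k ∈ Finset.Icc 1 M, (1 + T (2 * (k : ℤ) - 1))) =
      ∑ᶠ j : ℤ, m1 j * T (2 * j ^ 2) * qbin (T 1) (2 * (M:ℤ)) ((M:ℤ) - 2 * j) := by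
    intro M
    induction M with
    | zero =>
      rw [show Finset.Icc 1 0 = (∅ : Finset ℕ) by rfl, Finset.prod_empty]
      rw [finsum_eq_single _ (0 : ℤ) ?_]
      · norm_num [m1_zero, qbin, gaussAux_zero_right]
      · intro j hj
        have : qbin (T 1) (2 * ((0:ℕ):ℤ)) (((0:ℕ):ℤ) - 2 * j) = 0 := by
          rcases lt_or_ge j 0 with h | h
          · exact qbin_gt (by push_cast; omega)
          · exact qbin_neg (by push_cast; omega)
        rw [this, mul_zero]
    | succ n ih =>
      rw [Finset.prod_Icc_succ_top (by omega : 1 ≤ n + 1), ih]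
      push_cast
      rw [show (2 * ((n:ℤ)+1) - 1) = 2*(n:ℤ)+1 by ring]
      rw [show (2 * ((n:ℤ)+1)) = 2*(n:ℤ)+2 by ring]
      rw [A_succ n]
      ring
  refine ⟨main L, ?_⟩
  rw [main L, ← B_eq_A]
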